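/- Let I be a bounded interval with Lebesgue measure and let g : I → ℝ be measurable and bounded with g(x) > 0 a.e. Then for 1 < r < ∞, the closure in L^r(I) of the span of the functions {x ↦ g(x)^n : n ∈ ℕ} (including n = 0, the constant 1) equals the subspace of L^r(I) of functions having a σ(g)-measurable representative. -/

import Mathlib

open MeasureTheory Set Filter
open scoped ENNReal

/-- Factor a simple function measurable w.r.t. `σ(g)` through `g`. -/
private lemma simpleFunc_comap_factor (g : ℝ → ℝ)
    (φ : @MeasureTheory.SimpleFunc ℝ (MeasurableSpace.comap g Real.measurableSpace) ℝ) :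
    ∃ F : ℝ → ℝ, Measurable F ∧ ∀ x, F (g x) = φ x := by
  refine @MeasureTheory.SimpleFunc.induction ℝ ℝ
    (MeasurableSpace.comap g Real.measurableSpace) _
    (fun φ => ∃ F : ℝ → ℝ, Measurable F ∧ ∀ x, F (g x) = φ x) ?_ ?_ φ
  · intro c s hs
    obtain ⟨B, hB, hpre⟩ := MeasurableSpace.measurableSet_comap.mp hs
    refine ⟨B.indicator fun _ => c, measurable_const.indicator hB, fun x => ?_⟩
    simp only [MeasureTheory.SimpleFunc.piecewise_apply,
      MeasureTheory.SimpleFunc.coe_const, Function.const_apply,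
      MeasureTheory.SimpleFunc.coe_zero, Pi.zero_apply, Set.indicator_apply]
    have : g x ∈ B ↔ x ∈ s := by rw [← hpre]; rfl
    by_cases hx : x ∈ s <;> simp [hx, this]
  · rintro φ₁ φ₂ - ⟨F₁, hF₁, hF₁g⟩ ⟨F₂, hF₂, hF₂g⟩
    refine ⟨F₁ + F₂, hF₁.add hF₂, fun x => ?_⟩
    simp [hF₁g x, hF₂g x]

/-- If `Fn ∘ g` converges a.e. to `f₀`, then `f₀` agrees a.e. with a Borel
function of `g`. -/
private lemma exists_measurable_factor_of_tendsto (g : ℝ → ℝ) (hg : Measurable g)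
    (μ : Measure ℝ) (Fn : ℕ → ℝ → ℝ) (hFn : ∀ n, Measurable (Fn n)) (f₀ : ℝ → ℝ)
    (h : ∀ᵐ x ∂μ, Tendsto (fun n => Fn n (g x)) atTop (nhds (f₀ x))) :
    ∃ F : ℝ → ℝ, Measurable F ∧ f₀ =ᵐ[μ] fun x => F (g x) := by
  set T : Set ℝ := {y | ∃ c, Tendsto (fun n => Fn n y) atTop (nhds c)} with hTdef
  have hT : MeasurableSet T := measurableSet_exists_tendsto hFn
  have hνT : ∀ᵐ y ∂(μ.map g), ∃ c, Tendsto (fun n => Fn n y) atTop (nhds c) := by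
    rw [MeasureTheory.ae_iff]
    have : {y | ¬ ∃ c, Tendsto (fun n => Fn n y) atTop (nhds c)} = Tᶜ := rfl
    rw [this, Measure.map_apply hg hT.compl]
    refine measure_mono_null ?_ h
    intro x hx
    simp only [Set.mem_preimage, Set.mem_compl_iff, hTdef, Set.mem_setOf_eq] at hx
    simp only [Set.mem_compl_iff, Set.mem_setOf_eq]
    exact fun hc => hx ⟨f₀ x, hc⟩
  obtain ⟨F, hFmeas, htend⟩ :=
    measurable_limit_of_tendsto_metrizable_ae (fun n => (hFn n).aemeasurable) hνT
  have htend' : ∀ᵐ x ∂μ, Tendsto (fun n => Fn n (g x)) atTop (nhds (F (g x))) :=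
    MeasureTheory.ae_of_ae_map hg.aemeasurable htend
  refine ⟨F, hFmeas, ?_⟩
  filter_upwards [h, htend'] with x hx hx'
  exact tendsto_nhds_unique hx hx'

/-- Polynomials in `g` lie in the span of the monomials in `g`. -/
private lemma poly_mem_span (g : ℝ → ℝ) (q : Polynomial ℝ) :
    (fun x => q.eval (g x)) ∈
      Submodule.span ℝ {h : ℝ → ℝ | ∃ n : ℕ, h = fun x => g x ^ n} := by
  induction q using Polynomial.induction_on' with
  | add p q hp hq =>
      have : (fun x => (p + q).eval (g x)) =
          (fun x => p.eval (g x)) + fun x => q.eval (g x) := by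
        funext x; simp
      rw [this]; exact Submodule.add_mem _ hp hq
  | monomial n c =>
      have : (fun x => (Polynomial.monomial n c).eval (g x)) =
          c • fun x => g x ^ n := by
        funext x; simp [Polynomial.eval_monomial, smul_eq_mul]
      rw [this]
      exact Submodule.smul_mem _ _ (Submodule.subset_span ⟨n, rfl⟩)

/-- Every element of the span of the monomials in `g` is a polynomial in `g`. -/
private lemma span_subset_poly (g : ℝ → ℝ) {h : ℝ → ℝ}
    (hh : h ∈ Submodule.span ℝ {h : ℝ → ℝ | ∃ n : ℕ, h = fun x => g x ^ n}) :
    ∃ q : Polynomial ℝ, h = fun x => q.eval (g x) := by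
  refine Submodule.span_induction ?_ ?_ ?_ ?_ hh
  · rintro x ⟨n, rfl⟩
    exact ⟨Polynomial.X ^ n, by funext y; simp⟩
  · exact ⟨0, by funext y; simp⟩
  · rintro x y - - ⟨qx, rfl⟩ ⟨qy, rfl⟩
    exact ⟨qx + qy, by funext z; simp⟩
  · rintro c x - ⟨qx, rfl⟩
    exact ⟨Polynomial.C c * qx, by funext z; simp [smul_eq_mul]⟩

/-- The closure in `L^r(I)` of the span of the monomials `g(x)^n`, `n ∈ ℕ`,
of a bounded positive measurable function `g` consists exactly of those `L^r`
functions having a `σ(g)`-measurable representative. -/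
theorem closure_span_monomials_eq_sigma_measurable
    (a b r : ℝ) (hab : a < b) (hr : 1 < r)
    (g : ℝ → ℝ) (hg : Measurable g) (M : ℝ) (hbd : ∀ x, |g x| ≤ M)
    (hgpos : ∀ᵐ x ∂(volume.restrict (Ioo a b)), 0 < g x) :
    let μ := volume.restrict (Ioo a b)
    let S : Set (ℝ → ℝ) := {h | ∃ n : ℕ, h = fun x => g x ^ n}
    ∀ f : ℝ → ℝ, MemLp f (ENNReal.ofReal r) μ →
      ((∃ s : ℕ → ℝ → ℝ, (∀ n, s n ∈ Submodule.span ℝ S) ∧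
          Tendsto (fun n => eLpNorm (f - s n) (ENNReal.ofReal r) μ) atTop (nhds 0)) ↔
        ∃ f₀ : ℝ → ℝ,
          @Measurable ℝ ℝ (MeasurableSpace.comap g Real.measurableSpace) _ f₀ ∧
          f =ᵐ[μ] f₀) := by
  intro μ S f hf
  set p : ℝ≥0∞ := ENNReal.ofReal r with hpdef
  have hp0 : p ≠ 0 := by
    simp only [hpdef, Ne, ENNReal.ofReal_eq_zero, not_le]; linarith
  have hptop : p ≠ ∞ := ENNReal.ofReal_ne_top
  have hp1 : 1 ≤ p := by
    rw [hpdef, ← ENNReal.ofReal_one]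
    exact ENNReal.ofReal_le_ofReal hr.le
  haveI : IsFiniteMeasure μ := by
    constructor
    rw [Measure.restrict_apply_univ, Real.volume_Ioo]
    exact ENNReal.ofReal_lt_top
  constructor
  · -- forward direction
    rintro ⟨s, hs_mem, hs_tendsto⟩
    choose q hq using fun n => span_subset_poly g (hs_mem n)
    have hsm : ∀ n, AEStronglyMeasurable (s n) μ := fun n => by
      rw [hq n]
      exact (((q n).continuous.measurable).comp hg).aestronglyMeasurable
    have htm : TendstoInMeasure μ s atTop f := by
      refine tendstoInMeasure_of_tendsto_eLpNorm hp0 hsm hf.aestronglyMeasurable ?_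
      simpa only [eLpNorm_sub_comm] using hs_tendsto
    obtain ⟨ns, -, hns_ae⟩ := htm.exists_seq_tendsto_ae
    have h' : ∀ᵐ x ∂μ, Tendsto (fun i => (q (ns i)).eval (g x)) atTop (nhds (f x)) := by
      filter_upwards [hns_ae] with x hx
      have : (fun i => (q (ns i)).eval (g x)) = fun i => s (ns i) x := by
        funext i; rw [hq (ns i)]
      rw [this]; exact hx
    obtain ⟨F, hFmeas, hae⟩ := exists_measurable_factor_of_tendsto g hg μ
      (fun i y => (q (ns i)).eval y) (fun i => (q (ns i)).continuous.measurable) f h'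
    exact ⟨fun x => F (g x),
      hFmeas.comp (comap_measurable g), hae⟩
  · -- reverse direction
    rintro ⟨f₀, hf₀m, hff₀⟩
    have hsm : @StronglyMeasurable ℝ ℝ _ (MeasurableSpace.comap g Real.measurableSpace) f₀ :=
      @Measurable.stronglyMeasurable ℝ ℝ f₀ (MeasurableSpace.comap g Real.measurableSpace)
        _ _ _ _ _ hf₀m
    choose Fn hFn hFng using fun n => simpleFunc_comap_factor g (hsm.approx n)
    have h' : ∀ᵐ x ∂μ, Tendsto (fun n => Fn n (g x)) atTop (nhds (f₀ x)) := by
      refine MeasureTheory.ae_of_all _ fun x => ?_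
      have : (fun n => Fn n (g x)) = fun n => hsm.approx n x := by
        funext n; exact hFng n x
      rw [this]; exact hsm.tendsto_approx x
    obtain ⟨F, hFmeas, hae⟩ := exists_measurable_factor_of_tendsto g hg μ Fn hFn f₀ h'
    have hfF : f =ᵐ[μ] fun x => F (g x) := hff₀.trans hae
    have hmemFg : MemLp (fun x => F (g x)) p μ := hf.ae_eq hfF
    set ν : Measure ℝ := μ.map g with hνdef
    haveI : IsFiniteMeasure ν := μ.isFiniteMeasure_map g
    have hFν : MemLp F p ν :=
      (memLp_map_measure_iff hFmeas.aestronglyMeasurable hg.aemeasurable).2 hmemFg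
    have hM0 : (0 : ℝ) ≤ M := le_trans (abs_nonneg _) (hbd 0)
    -- key claim: arbitrarily good polynomial approximation
    have claim : ∀ δ : ℝ, 0 < δ → ∃ Q : Polynomial ℝ,
        eLpNorm (f - fun x => Q.eval (g x)) p μ ≤ ENNReal.ofReal δ := by
      intro δ hδ
      have hε₁ : (ENNReal.ofReal (δ / 2)) ≠ 0 := by
        simp only [Ne, ENNReal.ofReal_eq_zero, not_le]; linarith
      obtain ⟨h, -, hFh, hcont, hmemh⟩ :=
        hFν.exists_hasCompactSupport_eLpNorm_sub_le hptop hε₁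
      -- continuous approximation transferred back
      have step1 : eLpNorm ((fun x => F (g x)) - fun x => h (g x)) p μ ≤
          ENNReal.ofReal (δ / 2) := by
        have hFhm : AEStronglyMeasurable (F - h) ν :=
          (hFmeas.sub hcont.measurable).aestronglyMeasurable
        have := eLpNorm_map_measure (f := g) (g := F - h) (p := p) (μ := μ)
          hFhm hg.aemeasurable
        rw [← hνdef] at this
        have hcomp : (F - h) ∘ g = (fun x => F (g x)) - fun x => h (g x) := rfl
        rw [hcomp] at this
        rw [← this]; exact hFh
      -- polynomial approximation of h on [-M, M]
      set c : ℝ := ((μ Set.univ) ^ p.toReal⁻¹).toReal + 1 with hcdef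
      have hc0 : 0 < c := by
        rw [hcdef]
        have : (0:ℝ) ≤ ((μ Set.univ) ^ p.toReal⁻¹).toReal := ENNReal.toReal_nonneg
        linarith
      have hδ₂ : 0 < δ / 2 / c := by positivity
      obtain ⟨Q, hQ⟩ := exists_polynomial_near_of_continuousOn (-M) M h
        hcont.continuousOn _ hδ₂
      have step2 : eLpNorm ((fun x => h (g x)) - fun x => Q.eval (g x)) p μ ≤
          ENNReal.ofReal (δ / 2) := by
        have hbound : ∀ᵐ x ∂μ, ‖((fun x => h (g x)) - fun x => Q.eval (g x)) x‖ ≤ δ / 2 / c := by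
          refine MeasureTheory.ae_of_all _ fun x => ?_
          have hx : g x ∈ Set.Icc (-M) M := abs_le.mp (hbd x)
          have := hQ (g x) hx
          simp only [Pi.sub_apply, Real.norm_eq_abs]
          rw [abs_sub_comm]
          exact this.le
        refine (eLpNorm_le_of_ae_bound hbound).trans ?_
        have hA : (μ Set.univ) ^ p.toReal⁻¹ ≤ ENNReal.ofReal c := by
          have hfin : (μ Set.univ) ^ p.toReal⁻¹ ≠ ∞ := by
            refine ENNReal.rpow_ne_top_of_nonneg (by positivity) (measure_ne_top μ _)
          rw [← ENNReal.ofReal_toReal hfin]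
          exact ENNReal.ofReal_le_ofReal (by rw [hcdef]; linarith)
        calc (μ Set.univ) ^ p.toReal⁻¹ * ENNReal.ofReal (δ / 2 / c)
            ≤ ENNReal.ofReal c * ENNReal.ofReal (δ / 2 / c) :=
              mul_le_mul_left hA _
          _ = ENNReal.ofReal (c * (δ / 2 / c)) := (ENNReal.ofReal_mul hc0.le).symm
          _ = ENNReal.ofReal (δ / 2) := by
              rw [mul_div_cancel₀ _ hc0.ne']
      refine ⟨Q, ?_⟩
      have hcongr : eLpNorm (f - fun x => Q.eval (g x)) p μ =
          eLpNorm ((fun x => F (g x)) - fun x => Q.eval (g x)) p μ :=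
        eLpNorm_congr_ae (hfF.sub (EventuallyEq.refl _ _))
      rw [hcongr]
      have hsplit : (fun x => F (g x)) - (fun x => Q.eval (g x)) =
          ((fun x => F (g x)) - fun x => h (g x)) +
            ((fun x => h (g x)) - fun x => Q.eval (g x)) := by
        funext x; simp
      rw [hsplit]
      refine le_trans (eLpNorm_add_le ?_ ?_ hp1) ?_
      · exact ((hFmeas.comp hg).sub (hcont.measurable.comp hg)).aestronglyMeasurable
      · exact ((hcont.measurable.comp hg).sub
          (Q.continuous.measurable.comp hg)).aestronglyMeasurable
      · refine le_trans (add_le_add step1 step2) ?_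
        rw [← ENNReal.ofReal_add (by linarith) (by linarith)]
        rw [add_halves]
    -- build the approximating sequence
    have hpos : ∀ n : ℕ, (0:ℝ) < 1 / (n + 1) := fun n => by positivity
    choose Q hQ using fun n : ℕ => claim (1 / (n + 1)) (hpos n)
    refine ⟨fun n => fun x => (Q n).eval (g x), fun n => poly_mem_span g (Q n), ?_⟩
    have hupper : Tendsto (fun n : ℕ => ENNReal.ofReal (1 / (n + 1))) atTop (nhds 0) := by
      have : Tendsto (fun n : ℕ => (1:ℝ) / (n + 1)) atTop (nhds 0) :=
        tendsto_one_div_add_atTop_nhds_zero_nat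
      simpa using ENNReal.tendsto_ofReal this
    exact tendsto_of_tendsto_of_tendsto_of_le_of_le tendsto_const_nhds hupper
      (fun n => zero_le) (fun n => hQ n)
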